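/- Let M ∈ ℂ^{d×d} be upper Hessenberg and set m_d := ∏_{j=1}^{d−1} M_{j+1,j}. Let w ∈ ℂ^d and suppose M + w e_d^T is diagonalizable with pairwise distinct eigenvalues λ₁,…,λ_d, and let ω(z) = ∏_{i=1}^d (z − λ_i). Then for every polynomial p ∈ ℂ[X], p(M + w e_d^T) e₁ − p(M) e₁ = m_d · Σ_{i=1}^d (1/ω′(λ_i)) · p[M, λ_i] · w, where ω′(λ_i) = ∏_{j≠i} (λ_i − λ_j). -/

import Mathlib

open Matrix Finset

noncomputable def divDiffPoly (p : Polynomial ℂ) (lam : ℂ) : Polynomial ℂ :=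
  (p - Polynomial.C (p.eval lam)) / (Polynomial.X - Polynomial.C lam)

namespace DivDiffAux

open Polynomial

lemma divDiffPoly_char (p : Polynomial ℂ) (lam : ℂ) (q : Polynomial ℂ)
    (h : (X - C lam) * q = p - C (p.eval lam)) : divDiffPoly p lam = q := by
  unfold divDiffPoly; rw [← h]
  exact mul_div_cancel_left₀ q (X_sub_C_ne_zero lam)

lemma divDiffPoly_eq_sum (p : Polynomial ℂ) (lam : ℂ) :
    divDiffPoly p lam
      = ∑ n ∈ range (p.natDegree + 1), C (p.coeff n) *
          ∑ k ∈ range n, C (lam ^ (n - 1 - k)) * X ^ k := by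
  apply divDiffPoly_char
  have hgeom : ∀ n : ℕ, (X - C lam) * ∑ k ∈ range n, C (lam ^ (n - 1 - k)) * X ^ k
      = X ^ n - C (lam ^ n) := by
    intro n
    calc (X - C lam) * ∑ k ∈ range n, C (lam ^ (n - 1 - k)) * X ^ k
        = (∑ k ∈ range n, X ^ k * (C lam) ^ (n - 1 - k)) * (X - C lam) := by
          rw [mul_comm]; congr 1; apply Finset.sum_congr rfl; intro k _
          rw [← C_pow]; ring
      _ = X ^ n - (C lam) ^ n := geom_sum₂_mul X (C lam) n
      _ = X ^ n - C (lam ^ n) := by rw [C_pow]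
  rw [Finset.mul_sum]
  have h1 : p = ∑ n ∈ range (p.natDegree + 1), C (p.coeff n) * X ^ n := by
    conv_lhs => rw [p.as_sum_range' (p.natDegree + 1) (Nat.lt_succ_self _)]
    simp [C_mul_X_pow_eq_monomial]
  have h2 : p.eval lam = ∑ n ∈ range (p.natDegree + 1), p.coeff n * lam ^ n :=
    eval_eq_sum_range lam
  calc ∑ n ∈ range (p.natDegree + 1),
        (X - C lam) * (C (p.coeff n) * ∑ k ∈ range n, C (lam ^ (n - 1 - k)) * X ^ k)
      = ∑ n ∈ range (p.natDegree + 1), C (p.coeff n) * (X ^ n - C (lam ^ n)) := by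
        apply Finset.sum_congr rfl; intro n _; rw [← hgeom n]; ring
    _ = (∑ n ∈ range (p.natDegree + 1), C (p.coeff n) * X ^ n)
        - C (∑ n ∈ range (p.natDegree + 1), p.coeff n * lam ^ n) := by
        rw [map_sum, ← Finset.sum_sub_distrib]
        apply Finset.sum_congr rfl; intro n _
        rw [mul_sub, C_mul]
    _ = p - C (p.eval lam) := by rw [← h1, ← h2]

variable {d : ℕ}

lemma hess_pow_zero (H : Matrix (Fin (d+1)) (Fin (d+1)) ℂ)
    (hH : ∀ i j : Fin (d+1), (j : ℕ) + 1 < (i : ℕ) → H i j = 0) :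
    ∀ (m : ℕ) (i j : Fin (d+1)), (j : ℕ) + m < (i : ℕ) → (H ^ m) i j = 0 := by
  intro m
  induction m with
  | zero =>
    intro i j h
    rw [pow_zero, Matrix.one_apply_ne]
    intro hij; rw [hij] at h; omega
  | succ m ih =>
    intro i j h
    rw [pow_succ, Matrix.mul_apply]
    apply Finset.sum_eq_zero
    intro k _
    by_cases hk : (k : ℕ) + m < (i : ℕ)
    · rw [ih i k hk, zero_mul]
    · rw [hH k j (by omega), mul_zero]

lemma hess_pow_chain (H : Matrix (Fin (d+1)) (Fin (d+1)) ℂ)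
    (hH : ∀ i j : Fin (d+1), (j : ℕ) + 1 < (i : ℕ) → H i j = 0) :
    ∀ (m : ℕ) (j : Fin (d+1)) (h : (j : ℕ) + m ≤ d),
    (H ^ m) ⟨(j : ℕ) + m, Nat.lt_succ_of_le h⟩ j
      = ∏ t : Fin m, H ⟨(j : ℕ) + t + 1, by have := t.isLt; omega⟩
          ⟨(j : ℕ) + t, by have := t.isLt; omega⟩ := by
  intro m
  induction m with
  | zero =>
    intro j h
    simp only [Finset.univ_eq_empty, Finset.prod_empty, pow_zero]
    have : (⟨(j : ℕ) + 0, Nat.lt_succ_of_le h⟩ : Fin (d+1)) = j := by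
      apply Fin.ext; simp
    rw [this, Matrix.one_apply_eq]
  | succ m ih =>
    intro j h
    have hj1 : (j : ℕ) + 1 < d + 1 := by omega
    have h' : ((⟨(j : ℕ) + 1, hj1⟩ : Fin (d+1)) : ℕ) + m ≤ d := show (j:ℕ)+1+m ≤ d by omega
    have key := ih ⟨(j : ℕ) + 1, hj1⟩ h'
    have e1 : (⟨(j : ℕ) + (m + 1), Nat.lt_succ_of_le h⟩ : Fin (d+1))
        = ⟨((⟨(j : ℕ) + 1, hj1⟩ : Fin (d+1)) : ℕ) + m, Nat.lt_succ_of_le h'⟩ := by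
      apply Fin.ext; show (j:ℕ) + (m+1) = (j:ℕ) + 1 + m; omega
    rw [pow_succ, Matrix.mul_apply, e1]
    rw [Finset.sum_eq_single (⟨(j : ℕ) + 1, hj1⟩ : Fin (d+1))]
    · rw [key, Fin.prod_univ_succ, mul_comm]
      congr 1
      · apply Finset.prod_congr rfl
        intro t _
        congr 1 <;> apply Fin.ext <;> simp <;> omega
    · intro k _ hk
      by_cases hk2 : (k : ℕ) < (j : ℕ) + 1
      · rw [hess_pow_zero H hH m _ k (show (k:ℕ)+m < (j:ℕ)+1+m by omega), zero_mul]
      · have hgt : (j : ℕ) + 1 < (k : ℕ) := by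
          have : (k : ℕ) ≠ (j : ℕ) + 1 := fun hh => hk (Fin.ext hh)
          omega
        rw [hH k j hgt, mul_zero]
    · intro habs; exact absurd (Finset.mem_univ _) habs

lemma conj_pow (Xe : Matrix (Fin (d+1)) (Fin (d+1)) ℂ) (Λ : Fin (d+1) → ℂ)
    (hXe : IsUnit Xe.det) (m : ℕ) :
    (Xe * diagonal Λ * Xe⁻¹) ^ m = Xe * diagonal (fun i => Λ i ^ m) * Xe⁻¹ := by
  induction m with
  | zero =>
    simp only [pow_zero]
    rw [Matrix.diagonal_one, Matrix.mul_one, Matrix.mul_nonsing_inv Xe hXe]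
  | succ m ih =>
    rw [pow_succ, ih]
    have key : diagonal (fun i : Fin (d+1) => Λ i ^ m) * diagonal Λ
        = diagonal (fun i => Λ i ^ (m+1)) := by
      rw [Matrix.diagonal_mul_diagonal]
      simp [pow_succ]
    simp only [Matrix.mul_assoc]
    rw [show Xe⁻¹ * (Xe * (diagonal Λ * Xe⁻¹)) = diagonal Λ * Xe⁻¹ from by
      rw [← Matrix.mul_assoc, Matrix.nonsing_inv_mul Xe hXe, Matrix.one_mul]]
    rw [show diagonal (fun i : Fin (d+1) => Λ i ^ m) * (diagonal Λ * Xe⁻¹)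
        = diagonal (fun i => Λ i ^ (m+1)) * Xe⁻¹ from by rw [← Matrix.mul_assoc, key]]

lemma sum_mulVec' {N : ℕ} {ι : Type*} (s : Finset ι)
    (f : ι → Matrix (Fin N) (Fin N) ℂ) (v : Fin N → ℂ) :
    (∑ x ∈ s, f x) *ᵥ v = ∑ x ∈ s, f x *ᵥ v := by
  ext i
  simp only [Matrix.mulVec, dotProduct, Finset.sum_apply, Matrix.sum_apply, Finset.sum_mul]
  exact Finset.sum_comm

lemma mulVec_sum' {N : ℕ} {ι : Type*} (s : Finset ι)
    (Mx : Matrix (Fin N) (Fin N) ℂ) (f : ι → Fin N → ℂ) :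
    Mx *ᵥ (∑ x ∈ s, f x) = ∑ x ∈ s, Mx *ᵥ f x := by
  ext i
  simp only [Matrix.mulVec, dotProduct, Finset.sum_apply, Finset.mul_sum]
  exact Finset.sum_comm

end DivDiffAux

open DivDiffAux Polynomial in
theorem rank_one_update_divided_difference_form
    {d : ℕ}
    (M : Matrix (Fin (d + 1)) (Fin (d + 1)) ℂ)
    (hHess : ∀ i j : Fin (d + 1), (j : ℕ) + 1 < (i : ℕ) → M i j = 0)
    (w : Fin (d + 1) → ℂ)
    (Xe : Matrix (Fin (d + 1)) (Fin (d + 1)) ℂ) (Λ : Fin (d + 1) → ℂ)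
    (hXe : IsUnit Xe.det)
    (hdiag : M + vecMulVec w (Pi.single (Fin.last d) 1 : Fin (d + 1) → ℂ)
      = Xe * diagonal Λ * Xe⁻¹)
    (hdistinct : Function.Injective Λ)
    (p : Polynomial ℂ) :
    (Polynomial.aeval (M + vecMulVec w (Pi.single (Fin.last d) 1 : Fin (d + 1) → ℂ)) p).mulVec
        (Pi.single 0 1 : Fin (d + 1) → ℂ)
      - (Polynomial.aeval M p).mulVec (Pi.single 0 1 : Fin (d + 1) → ℂ)
    = (∏ j : Fin d, M j.succ j.castSucc) •
        ∑ i, (∏ j ∈ univ.erase i, (Λ i - Λ j))⁻¹ •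
          (Polynomial.aeval M (divDiffPoly p (Λ i))).mulVec w := by
  set ed : Fin (d+1) → ℂ := (Pi.single (Fin.last d) 1 : Fin (d + 1) → ℂ) with hed
  set e0 : Fin (d+1) → ℂ := (Pi.single 0 1 : Fin (d + 1) → ℂ) with he0
  set A := M + vecMulVec w ed with hA
  set md : ℂ := ∏ j : Fin d, M j.succ j.castSucc with hmd
  set c : Fin (d+1) → ℂ := fun i => Xe (Fin.last d) i * Xe⁻¹ i 0 with hc
  set dd : ℕ → ℂ := fun m => (A ^ m) (Fin.last d) 0 with hdd
  -- A is Hessenberg with the same subdiagonal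
  have hAHess : ∀ i j : Fin (d+1), (j : ℕ) + 1 < (i : ℕ) → A i j = 0 := by
    intro i j hij
    have hjne : j ≠ Fin.last d := by
      intro hj; rw [hj] at hij; simp [Fin.val_last] at hij; omega
    simp only [hA, Matrix.add_apply, vecMulVec_apply, hed, Pi.single_eq_of_ne hjne,
      mul_zero, add_zero]
    exact hHess i j hij
  -- F1 : dd m = ∑ i, c i * Λ i ^ m
  have F1 : ∀ m : ℕ, dd m = ∑ i, c i * Λ i ^ m := by
    intro m
    have hApow : A ^ m = Xe * diagonal (fun i => Λ i ^ m) * Xe⁻¹ := by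
      rw [hdiag]; exact conj_pow Xe Λ hXe m
    calc dd m = ((Xe * diagonal (fun i => Λ i ^ m)) * Xe⁻¹) (Fin.last d) 0 := by
          show (A ^ m) (Fin.last d) 0 = _; rw [hApow]
      _ = ∑ i, (Xe * diagonal (fun i => Λ i ^ m)) (Fin.last d) i * Xe⁻¹ i 0 :=
          Matrix.mul_apply
      _ = ∑ i, c i * Λ i ^ m := by
          apply Finset.sum_congr rfl; intro i _
          rw [Matrix.mul_diagonal]; show _ = Xe (Fin.last d) i * Xe⁻¹ i 0 * Λ i ^ m; ring
  -- F3 : dd m = 0 for m < d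
  have F3 : ∀ m : ℕ, m < d → dd m = 0 := by
    intro m hm
    exact hess_pow_zero A hAHess m (Fin.last d) 0 (by simp [Fin.val_last]; omega)
  -- F4 : dd d = md
  have F4 : dd d = md := by
    have h0d : ((0 : Fin (d+1)) : ℕ) + d ≤ d := by simp
    have := hess_pow_chain A hAHess d 0 h0d
    have hlast : (⟨((0 : Fin (d+1)) : ℕ) + d, Nat.lt_succ_of_le h0d⟩ : Fin (d+1))
        = Fin.last d := by apply Fin.ext; simp [Fin.val_last]
    rw [hlast] at this
    show (A ^ d) (Fin.last d) 0 = md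
    rw [this, hmd]
    apply Finset.prod_congr rfl
    intro t _
    have hcol : (⟨((0 : Fin (d+1)) : ℕ) + t, by have := t.isLt; omega⟩ : Fin (d+1))
        = t.castSucc := by apply Fin.ext; simp
    have hrow : (⟨((0 : Fin (d+1)) : ℕ) + t + 1, by have := t.isLt; omega⟩ : Fin (d+1))
        = t.succ := by apply Fin.ext; simp
    rw [hcol, hrow]
    have : (t.castSucc : Fin (d+1)) ≠ Fin.last d := by
      intro hcontra
      have := congrArg Fin.val hcontra
      simp [Fin.val_last] at this
      have := t.isLt; omega
    simp only [hA, Matrix.add_apply, vecMulVec_apply, hed, Pi.single_eq_of_ne this,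
      mul_zero, add_zero]
  -- EVAL : weighted sums of evaluations
  have EVAL : ∀ f : Polynomial ℂ, f.natDegree ≤ d →
      ∑ k, c k * f.eval (Λ k) = md * f.coeff d := by
    intro f hf
    have hev : ∀ k, f.eval (Λ k) = ∑ m ∈ range (d+1), f.coeff m * Λ k ^ m := fun k =>
      eval_eq_sum_range' (Nat.lt_succ_of_le hf) (Λ k)
    calc ∑ k, c k * f.eval (Λ k)
        = ∑ k, ∑ m ∈ range (d+1), c k * (f.coeff m * Λ k ^ m) := by
          apply Finset.sum_congr rfl; intro k _; rw [hev k, Finset.mul_sum]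
      _ = ∑ m ∈ range (d+1), ∑ k, c k * (f.coeff m * Λ k ^ m) := Finset.sum_comm
      _ = ∑ m ∈ range (d+1), f.coeff m * dd m := by
          apply Finset.sum_congr rfl; intro m _
          rw [F1 m, Finset.mul_sum]
          apply Finset.sum_congr rfl; intro k _; ring
      _ = md * f.coeff d := by
          rw [Finset.sum_eq_single d]
          · rw [F4]; ring
          · intro m hm hmd2
            rw [F3 m (by simp at hm; omega), mul_zero]
          · intro h; exact absurd (Finset.self_mem_range_succ d) h
  -- F5 : c i = md * (∏ j ∈ erase i, (Λ i - Λ j))⁻¹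
  have hprod_ne : ∀ i : Fin (d+1), (∏ j ∈ univ.erase i, (Λ i - Λ j)) ≠ 0 := by
    intro i
    apply Finset.prod_ne_zero_iff.mpr
    intro j hj
    have : j ≠ i := (Finset.mem_erase.mp hj).1
    exact sub_ne_zero_of_ne fun hc2 => this (hdistinct hc2.symm)
  have F5 : ∀ i : Fin (d+1), c i = md * (∏ j ∈ univ.erase i, (Λ i - Λ j))⁻¹ := by
    intro i
    set f : Polynomial ℂ := ∏ j ∈ univ.erase i, (X - C (Λ j)) with hfdef
    have hfmonic : f.Monic := monic_prod_of_monic _ _ fun j _ => monic_X_sub_C (Λ j)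
    have hfdeg : f.natDegree = d := by
      rw [hfdef, natDegree_prod _ _ fun j _ => X_sub_C_ne_zero (Λ j)]
      simp [Finset.card_erase_of_mem, Finset.card_univ]
    have hcoeff : f.coeff d = 1 := by
      have := hfmonic.coeff_natDegree
      rwa [hfdeg] at this
    have heval : ∀ k, f.eval (Λ k) = ∏ j ∈ univ.erase i, (Λ k - Λ j) := by
      intro k; rw [hfdef, eval_prod]; simp
    have hsum := EVAL f (le_of_eq hfdeg)
    rw [hcoeff, mul_one] at hsum
    rw [Finset.sum_eq_single i] at hsum
    · rw [heval i] at hsum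
      field_simp [hprod_ne i]
      linear_combination hsum
    · intro k _ hk
      have hz : ∏ j ∈ univ.erase i, (Λ k - Λ j) = 0 :=
        Finset.prod_eq_zero (Finset.mem_erase.mpr ⟨hk, Finset.mem_univ k⟩) (sub_self (Λ k))
      rw [heval k, hz, mul_zero]
    · intro h; exact absurd (Finset.mem_univ i) h
  -- single-entry dot products
  have hsing : ∀ x : Fin (d+1) → ℂ, ∑ j, ed j * x j = x (Fin.last d) := by
    intro x
    rw [Finset.sum_eq_single (Fin.last d)]
    · rw [hed, Pi.single_eq_same, one_mul]
    · intro b _ hb; rw [hed, Pi.single_eq_of_ne hb, zero_mul]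
    · intro h; exact absurd (Finset.mem_univ _) h
  have hAmul : ∀ x : Fin (d+1) → ℂ, A *ᵥ x = M *ᵥ x + x (Fin.last d) • w := by
    intro x
    rw [hA, Matrix.add_mulVec]
    congr 1
    funext i
    simp only [Matrix.mulVec, dotProduct, vecMulVec_apply, Pi.smul_apply, smul_eq_mul]
    rw [show ∑ j, w i * ed j * x j = w i * ∑ j, ed j * x j from by
      rw [Finset.mul_sum]; apply Finset.sum_congr rfl; intro j _; ring]
    rw [hsing x]; ring
  have hAe : ∀ n : ℕ, ((A ^ n) *ᵥ e0) (Fin.last d) = dd n := by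
    intro n
    show ((A ^ n) *ᵥ Pi.single 0 1) (Fin.last d) = (A ^ n) (Fin.last d) 0
    rw [Matrix.mulVec_single]
    exact mul_one _
  -- MONO : the key telescoping identity for powers
  have MONO : ∀ n : ℕ, (A ^ n) *ᵥ e0 - (M ^ n) *ᵥ e0
      = ∑ k ∈ range n, dd (n - 1 - k) • ((M ^ k) *ᵥ w) := by
    intro n
    induction n with
    | zero => simp
    | succ n ih =>
      calc (A ^ (n+1)) *ᵥ e0 - (M ^ (n+1)) *ᵥ e0
          = A *ᵥ ((A ^ n) *ᵥ e0) - M *ᵥ ((M ^ n) *ᵥ e0) := by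
            rw [Matrix.mulVec_mulVec, Matrix.mulVec_mulVec, ← pow_succ', ← pow_succ']
        _ = M *ᵥ ((A ^ n) *ᵥ e0 - (M ^ n) *ᵥ e0) + dd n • w := by
            rw [hAmul ((A ^ n) *ᵥ e0), hAe n, Matrix.mulVec_sub]
            abel
        _ = M *ᵥ (∑ k ∈ range n, dd (n - 1 - k) • ((M ^ k) *ᵥ w)) + dd n • w := by
            rw [ih]
        _ = (∑ k ∈ range n, dd (n - 1 - k) • ((M ^ (k+1)) *ᵥ w)) + dd n • w := by
            rw [mulVec_sum']
            congr 1
            apply Finset.sum_congr rfl; intro k _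
            rw [Matrix.mulVec_smul, Matrix.mulVec_mulVec, ← pow_succ']
        _ = ∑ k ∈ range (n+1), dd (n + 1 - 1 - k) • ((M ^ k) *ᵥ w) := by
            rw [Finset.sum_range_succ']
            congr 1
            · apply Finset.sum_congr rfl; intro k _
              congr 2
              omega
            · rw [pow_zero, Matrix.one_mulVec]
              congr 2
  -- expansion of aeval over range
  set N := p.natDegree + 1 with hN
  have hAeval : ∀ (B : Matrix (Fin (d+1)) (Fin (d+1)) ℂ) (v : Fin (d+1) → ℂ),
      (Polynomial.aeval B p) *ᵥ v = ∑ n ∈ range N, p.coeff n • ((B ^ n) *ᵥ v) := by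
    intro B v
    rw [Polynomial.aeval_eq_sum_range, sum_mulVec']
    apply Finset.sum_congr rfl; intro n _
    rw [Matrix.smul_mulVec]
  -- expansion of the divided-difference evaluation
  have hdiv : ∀ lam : ℂ, (Polynomial.aeval (R := ℂ) M (divDiffPoly p lam)) *ᵥ w
      = ∑ n ∈ range N, ∑ k ∈ range n, (p.coeff n * lam ^ (n-1-k)) • ((M ^ k) *ᵥ w) := by
    intro lam
    rw [divDiffPoly_eq_sum, map_sum, sum_mulVec']
    apply Finset.sum_congr rfl; intro n _
    rw [_root_.map_mul, map_sum, Polynomial.aeval_C, Finset.mul_sum, sum_mulVec']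
    apply Finset.sum_congr rfl; intro k _
    rw [_root_.map_mul, Polynomial.aeval_C, Polynomial.aeval_X_pow]
    rw [← mul_assoc, ← _root_.map_mul, ← Algebra.smul_def, Matrix.smul_mulVec]
  -- assemble
  calc (Polynomial.aeval A p) *ᵥ e0 - (Polynomial.aeval M p) *ᵥ e0
      = ∑ n ∈ range N, p.coeff n • ((A ^ n) *ᵥ e0 - (M ^ n) *ᵥ e0) := by
        rw [hAeval A e0, hAeval M e0, ← Finset.sum_sub_distrib]
        apply Finset.sum_congr rfl; intro n _
        rw [smul_sub]
    _ = ∑ n ∈ range N, ∑ k ∈ range n, (p.coeff n * dd (n - 1 - k)) • ((M ^ k) *ᵥ w) := by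
        apply Finset.sum_congr rfl; intro n _
        rw [MONO n, Finset.smul_sum]
        apply Finset.sum_congr rfl; intro k _
        rw [smul_smul]
    _ = ∑ n ∈ range N, ∑ k ∈ range n,
          (∑ i, c i * (p.coeff n * Λ i ^ (n - 1 - k))) • ((M ^ k) *ᵥ w) := by
        apply Finset.sum_congr rfl; intro n _
        apply Finset.sum_congr rfl; intro k _
        congr 1
        rw [F1 (n - 1 - k)]
        rw [Finset.mul_sum]
        apply Finset.sum_congr rfl; intro i _
        ring
    _ = ∑ n ∈ range N, ∑ k ∈ range n, ∑ i,
          (c i * (p.coeff n * Λ i ^ (n - 1 - k))) • ((M ^ k) *ᵥ w) := by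
        apply Finset.sum_congr rfl; intro n _
        apply Finset.sum_congr rfl; intro k _
        rw [Finset.sum_smul]
    _ = ∑ i, ∑ n ∈ range N, ∑ k ∈ range n,
          (c i * (p.coeff n * Λ i ^ (n - 1 - k))) • ((M ^ k) *ᵥ w) := by
        rw [Finset.sum_comm]
        apply Finset.sum_congr rfl; intro n _
        rw [Finset.sum_comm]
    _ = ∑ i, c i • ((Polynomial.aeval (R := ℂ) M (divDiffPoly p (Λ i))) *ᵥ w) := by
        apply Finset.sum_congr rfl; intro i _
        rw [hdiv (Λ i), Finset.smul_sum]
        apply Finset.sum_congr rfl; intro n _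
        rw [Finset.smul_sum]
        apply Finset.sum_congr rfl; intro k _
        rw [smul_smul]
    _ = md • ∑ i, (∏ j ∈ univ.erase i, (Λ i - Λ j))⁻¹ •
          ((Polynomial.aeval (R := ℂ) M (divDiffPoly p (Λ i))) *ᵥ w) := by
        rw [Finset.smul_sum]
        apply Finset.sum_congr rfl; intro i _
        rw [F5 i, smul_smul]
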